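/- arXiv:0811.3847 — 4 statements merged into one kernel-verified Lean document; each statement's English description precedes it below -/
import Mathlib

section
/- Let ν ∈ ℂ and set α = ν/2 − 1/4. Suppose q is holomorphic on an open set Ω ⊆ ℂ and satisfies the second Painlevé equation q''(s) = 2 q(s)³ + s q(s) − ν for all s ∈ Ω. Define U(s) = q(s)² + q'(s) + s/2 on Ω, and u(s) = 2^{−1/3} U(−2^{1/3} s) for those s ∈ ℂ with −2^{1/3} s ∈ Ω. Then at every such point s with u(s) ≠ 0, u satisfies the thirty-fourth Painlevé equation u''(s) = 4 u(s)² + 2 s u(s) + (u'(s)² − (2α)²)/(2 u(s)). -/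
/-- The real cube root of 2. -/
noncomputable def cbrt2 : ℝ := (2 : ℝ) ^ ((1 : ℝ) / 3)

/-- If `q` is holomorphic on an open set `Ω ⊆ ℂ` and solves Painlevé II
`q'' = 2q³ + sq − ν`, then `u(s) = 2^{-1/3} (q² + q' + s/2)(−2^{1/3} s)` solves
Painlevé XXXIV `u'' = 4u² + 2su + ((u')² − (2α)²)/(2u)` with `α = ν/2 − 1/4`,
at every point where it is defined and nonzero. -/
theorem stmt0 (ν α : ℂ) (hα : α = ν / 2 - 1 / 4)
    (Ω : Set ℂ) (hΩ : IsOpen Ω) (q : ℂ → ℂ)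
    (hq : DifferentiableOn ℂ q Ω)
    (hode : ∀ s ∈ Ω, deriv (deriv q) s = 2 * q s ^ 3 + s * q s - ν)
    (U u : ℂ → ℂ)
    (hU : ∀ s : ℂ, U s = q s ^ 2 + deriv q s + s / 2)
    (hu : ∀ s : ℂ, u s = ((cbrt2 : ℝ) : ℂ)⁻¹ * U (-((cbrt2 : ℝ) : ℂ) * s)) :
    ∀ s : ℂ, -((cbrt2 : ℝ) : ℂ) * s ∈ Ω → u s ≠ 0 →
      deriv (deriv u) s =
        4 * u s ^ 2 + 2 * s * u s + ((deriv u s) ^ 2 - (2 * α) ^ 2) / (2 * u s) := by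
  set c : ℂ := ((cbrt2 : ℝ) : ℂ) with hc
  have hc3 : c ^ 3 = 2 := by
    have : cbrt2 ^ 3 = 2 := by
      rw [cbrt2, ← Real.rpow_natCast ((2:ℝ) ^ ((1:ℝ)/3)) 3, ← Real.rpow_mul (by norm_num)]
      norm_num
    rw [hc]
    exact_mod_cast congrArg (Complex.ofReal) this
  have hc0 : c ≠ 0 := by
    intro h
    rw [h] at hc3
    norm_num at hc3
  -- analyticity of q at points of Ω
  have hqa : ∀ t ∈ Ω, AnalyticAt ℂ q t := fun t ht => hq.analyticAt (hΩ.mem_nhds ht)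
  have hqaOn : AnalyticOnNhd ℂ q Ω := hq.analyticOnNhd hΩ
  have hq'On : AnalyticOnNhd ℂ (deriv q) Ω := hqaOn.deriv
  have hUeq : U = fun t => q t * q t + deriv q t + t / 2 := by
    funext t; rw [hU t]; ring
  have hUanOn : AnalyticOnNhd ℂ U Ω := by
    intro t ht
    rw [hUeq]
    exact (((hqa t ht).mul (hqa t ht)).add (hq'On t ht)).add
      ((analyticAt_id).div analyticAt_const two_ne_zero)
  -- first derivative of U on Ω
  have derivU : ∀ t ∈ Ω, deriv U t = 2 * (q t * U t) - (ν - 1/2) := by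
    intro t ht
    have h1 : HasDerivAt q (deriv q t) t := ((hqa t ht).differentiableAt).hasDerivAt
    have h2 : HasDerivAt (deriv q) (deriv (deriv q) t) t :=
      ((hq'On t ht).differentiableAt).hasDerivAt
    have hU' : HasDerivAt U ((deriv q t * q t + q t * deriv q t + deriv (deriv q) t) + 1/2) t := by
      rw [hUeq]
      exact ((h1.mul h1).add h2).add ((hasDerivAt_id t).div_const 2)
    rw [hU'.deriv, hode t ht, hU t]
    ring
  intro s₀ ht₀ hu0
  set t₀ : ℂ := -c * s₀ with hT
  -- second derivative of U at t₀
  have hderU : deriv U =ᶠ[nhds t₀] fun t => 2 * (q t * U t) - (ν - 1/2) := by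
    filter_upwards [hΩ.mem_nhds ht₀] with t ht
    exact derivU t ht
  have hUd : DifferentiableAt ℂ U t₀ := (hUanOn t₀ ht₀).differentiableAt
  have hq1 : HasDerivAt q (deriv q t₀) t₀ := ((hqa t₀ ht₀).differentiableAt).hasDerivAt
  have hU2 : deriv (deriv U) t₀ =
      2 * (deriv q t₀ * U t₀ + q t₀ * deriv U t₀) := by
    rw [hderU.deriv_eq]
    have : HasDerivAt (fun t => 2 * (q t * U t) - (ν - 1/2))
        (2 * (deriv q t₀ * U t₀ + q t₀ * deriv U t₀)) t₀ :=
      ((hq1.mul hUd.hasDerivAt).const_mul 2).sub_const _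
    exact this.deriv
  -- derivative of u on the preimage set
  have hueq : u = fun s => c⁻¹ * U (-c * s) := funext hu
  have hinner : ∀ s : ℂ, HasDerivAt (fun x : ℂ => -c * x) (-c) s := by
    intro s
    simpa using (hasDerivAt_id s).const_mul (-c)
  have huderiv : ∀ s : ℂ, -c * s ∈ Ω → deriv u s = -(deriv U (-c * s)) := by
    intro s hs
    have hcomp : HasDerivAt (fun x => U (-c * x)) (deriv U (-c * s) * -c) s :=
      ((hUanOn _ hs).differentiableAt.hasDerivAt).comp s (hinner s)
    have : HasDerivAt u (c⁻¹ * (deriv U (-c * s) * -c)) s := by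
      rw [hueq]; exact hcomp.const_mul c⁻¹
    rw [this.deriv]
    field_simp
  have hSopen : IsOpen {s : ℂ | -c * s ∈ Ω} :=
    hΩ.preimage (continuous_const.mul continuous_id)
  have hmem : s₀ ∈ {s : ℂ | -c * s ∈ Ω} := ht₀
  have hderu : deriv u =ᶠ[nhds s₀] fun s => -(deriv U (-c * s)) := by
    filter_upwards [hSopen.mem_nhds hmem] with s hs
    exact huderiv s hs
  have hu2 : deriv (deriv u) s₀ = c * deriv (deriv U) t₀ := by
    rw [hderu.deriv_eq]
    have hcomp : HasDerivAt (fun x => deriv U (-c * x)) (deriv (deriv U) t₀ * -c) s₀ :=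
      by
        have h := (((hUanOn).deriv t₀ ht₀).differentiableAt.hasDerivAt)
        rw [hT] at h ⊢
        exact h.comp s₀ (hinner s₀)
    have : HasDerivAt (fun s => -(deriv U (-c * s))) (-(deriv (deriv U) t₀ * -c)) s₀ := hcomp.neg
    rw [this.deriv]
    ring
  -- algebra
  have hVu : U t₀ = c * u s₀ := by
    rw [hu s₀, ← mul_assoc, mul_inv_cancel₀ hc0, one_mul]
  have hqp : deriv q t₀ = U t₀ - q t₀ * q t₀ - t₀ / 2 := by
    rw [hU t₀]; ring
  have hV' : deriv U t₀ = 2 * (q t₀ * U t₀) - (ν - 1/2) := derivU t₀ ht₀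
  have hu' : deriv u s₀ = -(deriv U t₀) := huderiv s₀ ht₀
  rw [hu2, hU2, hqp, hV', hVu, hu', hV', hVu, hα, hT]
  have h2u : (2 : ℂ) * u s₀ ≠ 0 := by
    simp [hu0]
  field_simp
  linear_combination (128 * s₀ * u s₀ ^ 2 + 256 * u s₀ ^ 3) * hc3
end

section
/- Let α ∈ ℂ and set ν = 2α + 1/2. Suppose u is holomorphic and nowhere vanishing on an open set Ω ⊆ ℂ and satisfies the thirty-fourth Painlevé equation u''(s) = 4 u(s)² + 2 s u(s) + (u'(s)² − (2α)²)/(2 u(s)) for all s ∈ Ω. Define Q(s) = (u'(s) − 2α)/(2 u(s)) on Ω, and q(s) = −2^{−1/3} Q(−2^{−1/3} s) for those s ∈ ℂ with −2^{−1/3} s ∈ Ω. Then q satisfies the second Painlevé equation q''(s) = 2 q(s)³ + s q(s) − ν at every such point. -/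
/-- If `u` is holomorphic and nowhere vanishing on an open set `Ω ⊆ ℂ` and solves
Painlevé XXXIV `u'' = 4u² + 2su + ((u')² − (2α)²)/(2u)`, then
`q(s) = −2^{-1/3} Q(−2^{-1/3} s)` with `Q = (u' − 2α)/(2u)` solves Painlevé II
`q'' = 2q³ + sq − ν` with `ν = 2α + 1/2`, at every point where it is defined. -/
theorem stmt1 (α ν : ℂ) (hν : ν = 2 * α + 1 / 2)
    (Ω : Set ℂ) (hΩ : IsOpen Ω) (u : ℂ → ℂ)
    (hu : DifferentiableOn ℂ u Ω) (hne : ∀ s ∈ Ω, u s ≠ 0)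
    (hode : ∀ s ∈ Ω, deriv (deriv u) s =
      4 * u s ^ 2 + 2 * s * u s + ((deriv u s) ^ 2 - (2 * α) ^ 2) / (2 * u s))
    (Q q : ℂ → ℂ)
    (hQ : ∀ s : ℂ, Q s = (deriv u s - 2 * α) / (2 * u s))
    (hq : ∀ s : ℂ, q s = -((cbrt2 : ℝ) : ℂ)⁻¹ * Q (-((cbrt2 : ℝ) : ℂ)⁻¹ * s)) :
    ∀ s : ℂ, -((cbrt2 : ℝ) : ℂ)⁻¹ * s ∈ Ω →
      deriv (deriv q) s = 2 * q s ^ 3 + s * q s - ν := by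
  set c : ℂ := -((cbrt2 : ℝ) : ℂ)⁻¹ with hc
  -- basic facts about c
  have hcb3 : (cbrt2 : ℝ) ^ (3 : ℕ) = 2 := by
    rw [cbrt2, ← Real.rpow_natCast ((2:ℝ) ^ ((1:ℝ)/3)) 3, ← Real.rpow_mul (by norm_num)]
    norm_num
  have hcb3' : ((cbrt2 : ℝ) : ℂ) ^ (3 : ℕ) = 2 := by
    norm_cast
  have hcbne : ((cbrt2 : ℝ) : ℂ) ≠ 0 := by
    intro h
    rw [h] at hcb3'
    norm_num at hcb3'
  have hc3 : c ^ 3 = -(1/2) := by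
    rw [hc]
    field_simp [hcb3']
    norm_num
    exact hcb3'.symm
  have hcne : c ≠ 0 := by
    intro h
    rw [h] at hc3
    norm_num at hc3
  -- analyticity of u and deriv u on Ω
  have huAn : AnalyticOnNhd ℂ u Ω := hu.analyticOnNhd hΩ
  have huA : ∀ t ∈ Ω, AnalyticAt ℂ u t := fun t ht => huAn t ht
  have huA' : ∀ t ∈ Ω, AnalyticAt ℂ (deriv u) t := fun t ht => huAn.deriv t ht
  -- Q satisfies the Riccati equation
  have hQd : ∀ t ∈ Ω, HasDerivAt Q (2 * u t + t - Q t ^ 2) t := by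
    intro t ht
    have hU := hne t ht
    have hnum : HasDerivAt (fun s => deriv u s - 2 * α) (deriv (deriv u) t) t :=
      ((huA' t ht).differentiableAt.hasDerivAt).sub_const _
    have hden : HasDerivAt (fun s => 2 * u s) (2 * deriv u t) t :=
      ((huA t ht).differentiableAt.hasDerivAt).const_mul 2
    have hdenne : 2 * u t ≠ 0 := by simp [hU]
    have hdiv := hnum.div hden hdenne
    have heq : (fun s => (deriv u s - 2 * α) / (2 * u s)) = Q := by
      funext s; rw [hQ s]
    have heq' : ((fun s => deriv u s - 2 * α) / fun s => 2 * u s) = Q := by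
      funext s; simp only [Pi.div_apply, hQ s]
    rw [heq'] at hdiv
    refine hdiv.congr_deriv ?_
    rw [hode t ht, hQ t]
    field_simp
    ring
  have hQΩ : Set.EqOn (deriv Q) (fun t => 2 * u t + t - Q t ^ 2) Ω :=
    fun t ht => (hQd t ht).deriv
  -- second derivative of Q
  have hQd2 : ∀ t ∈ Ω, HasDerivAt (deriv Q)
      (2 * Q t ^ 3 - 2 * t * Q t + (4 * α + 1)) t := by
    intro t ht
    have hU := hne t ht
    have h1 : HasDerivAt (fun s => 2 * u s + s - Q s ^ 2)
        (2 * deriv u t + 1 - (2 : ℕ) * Q t ^ 1 * (2 * u t + t - Q t ^ 2)) t :=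
      ((((huA t ht).differentiableAt.hasDerivAt).const_mul 2).add
        (hasDerivAt_id t)).sub ((hQd t ht).pow 2)
    have h2 : HasDerivAt (deriv Q)
        (2 * deriv u t + 1 - (2 : ℕ) * Q t ^ 1 * (2 * u t + t - Q t ^ 2)) t := by
      apply h1.congr_of_eventuallyEq
      filter_upwards [hΩ.mem_nhds ht] with s hs
      exact hQΩ hs
    convert h2 using 1
    have hu' : deriv u t = 2 * u t * Q t + 2 * α := by
      rw [hQ t]
      field_simp
      ring
    rw [hu']
    push_cast
    ring
  -- now work with q
  intro s₀ hs₀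
  have hqe : q = fun s => c * Q (c * s) := by
    funext s; rw [hq s]
  have hpre : IsOpen {s : ℂ | c * s ∈ Ω} := hΩ.preimage (by continuity)
  have hqd : ∀ s ∈ {s : ℂ | c * s ∈ Ω}, HasDerivAt q (c ^ 2 * deriv Q (c * s)) s := by
    intro s hs
    have hinner : HasDerivAt (fun s : ℂ => c * s) c s := by
      simpa using (hasDerivAt_id s).const_mul c
    have h := ((hQd (c * s) hs).comp s hinner).const_mul c
    have h' : HasDerivAt q (c * ((2 * u (c * s) + c * s - Q (c * s) ^ 2) * c)) s := by
      rw [hqe]; exact h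
    convert h' using 1
    rw [hQΩ hs]
    ring
  -- second derivative of q
  have hinner : HasDerivAt (fun s : ℂ => c * s) c s₀ := by
    simpa using (hasDerivAt_id s₀).const_mul c
  have h1 : HasDerivAt (fun s => c ^ 2 * deriv Q (c * s))
      (c ^ 3 * (2 * Q (c * s₀) ^ 3 - 2 * (c * s₀) * Q (c * s₀) + (4 * α + 1))) s₀ := by
    have h := ((hQd2 (c * s₀) hs₀).comp s₀ hinner).const_mul (c ^ 2)
    refine h.congr_deriv ?_
    ring
  have h2 : HasDerivAt (deriv q)
      (c ^ 3 * (2 * Q (c * s₀) ^ 3 - 2 * (c * s₀) * Q (c * s₀) + (4 * α + 1))) s₀ := by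
    apply h1.congr_of_eventuallyEq
    filter_upwards [hpre.mem_nhds hs₀] with s hs
    exact (hqd s hs).deriv
  rw [h2.deriv, hq s₀]
  linear_combination (-2 * s₀ * (Q (c * s₀)) * c + 4 * α + 1) * hc3 + hν
end

section
/- For every real x > 0, the improper integral ∫₁^∞ (log t)/(√(t−1)·(t+x)) dt converges and equals (π log x)/√(x+1) + (π/√(x+1)) · log((√(x+1)+1)/(√(x+1)−1)). -/
open MeasureTheory Real
open Set Filter


lemma base_deriv {c : ℝ} (hc : 0 < c) (u : ℝ) :
    HasDerivAt (fun u : ℝ => c⁻¹ * arctan (u / c)) ((u ^ 2 + c ^ 2)⁻¹) u := by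
  have h1 : HasDerivAt (fun u : ℝ => u / c) (1 / c) u := (hasDerivAt_id u).div_const c
  have h2 := (Real.hasDerivAt_arctan (u / c)).comp u h1
  have h3 := h2.const_mul c⁻¹
  refine h3.congr_deriv ?_
  have hc' : c ≠ 0 := hc.ne'
  field_simp
  ring

lemma base_tendsto {c : ℝ} (hc : 0 < c) :
    Tendsto (fun u : ℝ => c⁻¹ * arctan (u / c)) atTop (nhds (c⁻¹ * (π / 2))) := by
  have h : Tendsto (fun u : ℝ => u / c) atTop atTop := tendsto_id.atTop_div_const hc
  exact (Real.tendsto_arctan_atTop.mono_right nhdsWithin_le_nhds |>.comp h).const_mul _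

lemma base_integrable {c : ℝ} (hc : 0 < c) :
    IntegrableOn (fun u : ℝ => (u ^ 2 + c ^ 2)⁻¹) (Ioi 0) := by
  refine integrableOn_Ioi_deriv_of_nonneg' (g := fun u : ℝ => c⁻¹ * arctan (u / c))
    (fun u _ => base_deriv hc u) (fun u _ => by positivity) (base_tendsto hc)

lemma base_integral {c : ℝ} (hc : 0 < c) :
    ∫ u in Ioi (0:ℝ), (u ^ 2 + c ^ 2)⁻¹ = π / (2 * c) := by
  rw [integral_Ioi_of_hasDerivAt_of_tendsto' (fun u _ => base_deriv hc u)
    (base_integrable hc) (base_tendsto hc)]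
  simp [arctan_zero]
  ring

lemma pf_eq {a b : ℝ} (hb : 0 < b) (ha0 : 0 < a) (hab : b ≠ a) (u : ℝ) :
    ((u ^ 2 + b ^ 2) * (u ^ 2 + a ^ 2))⁻¹ =
      (a ^ 2 - b ^ 2)⁻¹ * ((u ^ 2 + b ^ 2)⁻¹ - (u ^ 2 + a ^ 2)⁻¹) := by
  have h1 : u ^ 2 + b ^ 2 > 0 := by positivity
  have h2 : u ^ 2 + a ^ 2 > 0 := by positivity
  have h3 : a ^ 2 - b ^ 2 ≠ 0 := by
    intro h
    apply hab
    rcases mul_eq_zero.mp (by nlinarith : (b - a) * (b + a) = 0) with h'|h' <;> linarith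
  field_simp
  ring

lemma two_integrable {a b : ℝ} (hb : 0 < b) (ha0 : 0 < a) (hab : b ≠ a) :
    IntegrableOn (fun u : ℝ => ((u ^ 2 + b ^ 2) * (u ^ 2 + a ^ 2))⁻¹) (Ioi 0) := by
  have h : IntegrableOn (fun u : ℝ =>
      (a ^ 2 - b ^ 2)⁻¹ * ((u ^ 2 + b ^ 2)⁻¹ - (u ^ 2 + a ^ 2)⁻¹)) (Ioi 0) :=
    ((base_integrable hb).sub (base_integrable ha0)).const_mul _
  exact h.congr_fun (fun u _ => (pf_eq hb ha0 hab u).symm) measurableSet_Ioi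

lemma two_integral {a b : ℝ} (hb : 0 < b) (ha0 : 0 < a) (hab : b ≠ a) :
    ∫ u in Ioi (0:ℝ), ((u ^ 2 + b ^ 2) * (u ^ 2 + a ^ 2))⁻¹ = π / (2 * a * b * (a + b)) := by
  rw [setIntegral_congr_fun measurableSet_Ioi (fun u _ => pf_eq hb ha0 hab u)]
  rw [integral_const_mul, integral_sub (base_integrable hb) (base_integrable ha0),
    base_integral hb, base_integral ha0]
  have h3 : a ^ 2 - b ^ 2 ≠ 0 := by
    intro h
    apply hab
    rcases mul_eq_zero.mp (by nlinarith : (b - a) * (b + a) = 0) with h'|h' <;> linarith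
  field_simp
  ring

lemma sqrt_kernel_integrable {a : ℝ} (ha : 0 < a) :
    IntegrableOn (fun u : ℝ => Real.sqrt u / (u ^ 2 + a ^ 2)) (Ioi 0) := by
  have hcont : Continuous (fun u : ℝ => Real.sqrt u / (u ^ 2 + a ^ 2)) :=
    Real.continuous_sqrt.div (by continuity) (fun u => by positivity)
  have h1 : IntegrableOn (fun u : ℝ => Real.sqrt u / (u ^ 2 + a ^ 2)) (Ioc 0 1) :=
    hcont.integrableOn_Ioc
  have h2 : IntegrableOn (fun u : ℝ => Real.sqrt u / (u ^ 2 + a ^ 2)) (Ioi 1) := by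
    have hb : IntegrableOn (fun u : ℝ => u ^ (-(3:ℝ)/2)) (Ioi 1) := by
      apply integrableOn_Ioi_rpow_of_lt (by norm_num) one_pos
    refine hb.mono' hcont.aestronglyMeasurable.restrict ?_
    filter_upwards [ae_restrict_mem measurableSet_Ioi] with u hu
    have hu1 : (1:ℝ) < u := hu
    have hu0 : (0:ℝ) < u := one_pos.trans hu1
    rw [Real.norm_eq_abs, abs_of_nonneg (by positivity)]
    have e1 : Real.sqrt u = u ^ ((1:ℝ)/2) := Real.sqrt_eq_rpow u
    have e2 : u ^ (-(3:ℝ)/2) = u ^ ((1:ℝ)/2) / u ^ (2:ℝ) := by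
      rw [← Real.rpow_sub hu0]; norm_num
    rw [e1, e2, Real.rpow_two]
    apply div_le_div_of_nonneg_left (by positivity) (by positivity)
    nlinarith
  have := h1.union h2
  rwa [Ioc_union_Ioi_eq_Ioi (by norm_num : (0:ℝ) ≤ 1)] at this

lemma log_kernel_cont {a c : ℝ} (ha : 0 < a) (hc : 0 < c) :
    Continuous (fun u : ℝ => Real.log (u ^ 2 + c ^ 2) / (u ^ 2 + a ^ 2)) := by
  refine Continuous.div ?_ (by continuity) (fun u => by positivity)
  exact ((continuous_pow 2).add continuous_const).log (fun u => by simp only [Pi.add_apply]; positivity)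

lemma log_le_four_rpow {y : ℝ} (hy : 0 < y) : Real.log y ≤ 4 * y ^ ((1:ℝ)/4) := by
  have h1 : Real.log (y ^ ((1:ℝ)/4)) = (1/4) * Real.log y := Real.log_rpow hy _
  have h2 : Real.log (y ^ ((1:ℝ)/4)) ≤ y ^ ((1:ℝ)/4) - 1 :=
    Real.log_le_sub_one_of_pos (Real.rpow_pos_of_pos hy _)
  nlinarith [Real.rpow_pos_of_pos hy ((1:ℝ)/4)]

lemma log_kernel_bound {a c : ℝ} (hc : 1 ≤ c) {u : ℝ} (hu : 0 < u) :
    Real.log (u ^ 2 + c ^ 2) ≤ 4 * (Real.sqrt u + c) := by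
  have hc0 : (0:ℝ) < c := lt_of_lt_of_le one_pos hc
  have hy : (0:ℝ) < u ^ 2 + c ^ 2 := by positivity
  refine (log_le_four_rpow hy).trans ?_
  have h1 : (u ^ 2 + c ^ 2) ^ ((1:ℝ)/4) ≤ ((u + c) ^ (2:ℝ)) ^ ((1:ℝ)/4) := by
    apply Real.rpow_le_rpow (by positivity) _ (by norm_num)
    rw [Real.rpow_two]; nlinarith
  have h2 : ((u + c) ^ (2:ℝ)) ^ ((1:ℝ)/4) = (u + c) ^ ((1:ℝ)/2) := by
    rw [← Real.rpow_mul (by positivity : (0:ℝ) ≤ u + c)]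
    norm_num
  have h3 : (u + c) ^ ((1:ℝ)/2) = Real.sqrt (u + c) := (Real.sqrt_eq_rpow (u + c)).symm
  have h4 : Real.sqrt (u + c) ≤ Real.sqrt u + c := by
    rw [show Real.sqrt u + c = Real.sqrt ((Real.sqrt u + c)^2) from
      (Real.sqrt_sq (by positivity)).symm]
    apply Real.sqrt_le_sqrt
    nlinarith [Real.sq_sqrt hu.le, Real.sqrt_nonneg u]
  nlinarith [h1, h2 ▸ h3 ▸ (h1.trans_eq (h2.trans h3))]

lemma log_kernel_integrable {a c : ℝ} (ha : 0 < a) (hc : 1 ≤ c) :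
    IntegrableOn (fun u : ℝ => Real.log (u ^ 2 + c ^ 2) / (u ^ 2 + a ^ 2)) (Ioi 0) := by
  have hc0 : (0:ℝ) < c := lt_of_lt_of_le one_pos hc
  have hg : IntegrableOn
      (fun u : ℝ => 4 * (Real.sqrt u / (u ^ 2 + a ^ 2)) + (4 * c) * (u ^ 2 + a ^ 2)⁻¹)
      (Ioi 0) := ((sqrt_kernel_integrable ha).const_mul 4).add ((base_integrable ha).const_mul _)
  refine hg.mono' (log_kernel_cont ha hc0).aestronglyMeasurable.restrict ?_
  filter_upwards [ae_restrict_mem measurableSet_Ioi] with u hu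
  have hu0 : (0:ℝ) < u := hu
  have hden : (0:ℝ) < u ^ 2 + a ^ 2 := by positivity
  have hnum : (0:ℝ) ≤ Real.log (u ^ 2 + c ^ 2) := by
    apply Real.log_nonneg; nlinarith
  rw [Real.norm_eq_abs, abs_of_nonneg (by positivity)]
  have hb := log_kernel_bound (a := a) hc hu0
  rw [div_le_iff₀ hden]
  have hs : Real.sqrt u ≥ 0 := Real.sqrt_nonneg u
  have expand : (4 * (Real.sqrt u / (u ^ 2 + a ^ 2)) + (4 * c) * (u ^ 2 + a ^ 2)⁻¹)
      * (u ^ 2 + a ^ 2) = 4 * (Real.sqrt u + c) := by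
    field_simp
  rw [expand]
  exact hb

lemma ftc_b {u : ℝ} (hu : 0 < u) {B : ℝ} (hB : 1 ≤ B) :
    ∫ b in (1:ℝ)..B, 2 * b / (u ^ 2 + b ^ 2) =
      Real.log (u ^ 2 + B ^ 2) - Real.log (u ^ 2 + 1) := by
  have hderiv : ∀ b ∈ Set.uIcc (1:ℝ) B,
      HasDerivAt (fun b : ℝ => Real.log (u ^ 2 + b ^ 2)) (2 * b / (u ^ 2 + b ^ 2)) b := by
    intro b _
    have h1 : HasDerivAt (fun b : ℝ => u ^ 2 + b ^ 2) (2 * b) b := by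
      simpa using (hasDerivAt_pow 2 b).const_add (u ^ 2)
    exact h1.log (by positivity)
  have hcont : ContinuousOn (fun b : ℝ => 2 * b / (u ^ 2 + b ^ 2)) (Set.uIcc 1 B) := by
    apply ContinuousOn.div (by fun_prop) (by fun_prop) (fun b _ => by positivity)
  have := intervalIntegral.integral_eq_sub_of_hasDerivAt hderiv
    (hcont.intervalIntegrable)
  simpa using this

lemma ftc_outer {a B : ℝ} (ha : 0 < a) (hB : 1 ≤ B) :
    ∫ b in (1:ℝ)..B, π / (a * (a + b)) =
      π / a * (Real.log (a + B) - Real.log (a + 1)) := by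
  have hderiv : ∀ b ∈ Set.uIcc (1:ℝ) B,
      HasDerivAt (fun b : ℝ => π / a * Real.log (a + b)) (π / (a * (a + b))) b := by
    intro b hb
    have hb0 : 0 < b := by
      rcases Set.mem_uIcc.mp hb with h|h
      · linarith [h.1]
      · linarith [h.1, hB]
    have h1 : HasDerivAt (fun b : ℝ => a + b) 1 b := (hasDerivAt_id b).const_add a
    have h2 := (h1.log (by positivity)).const_mul (π / a)
    refine h2.congr_deriv ?_
    field_simp
  have hcont : ContinuousOn (fun b : ℝ => π / (a * (a + b))) (Set.uIcc 1 B) := by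
    apply ContinuousOn.div (by fun_prop) (by fun_prop)
    intro b hb
    have hb0 : 0 < b := by
      rcases Set.mem_uIcc.mp hb with h|h
      · linarith [h.1]
      · linarith [h.1, hB]
    positivity
  have := intervalIntegral.integral_eq_sub_of_hasDerivAt hderiv (hcont.intervalIntegrable)
  rw [this]
  ring

lemma ae_ne_real (a : ℝ) : ∀ᵐ b : ℝ ∂(volume : Measure ℝ), b ≠ a := by
  rw [ae_iff]
  have : {b : ℝ | ¬ b ≠ a} = {a} := by ext b; simp
  rw [this]
  exact measure_singleton a

lemma fubini_step {a : ℝ} (ha : 0 < a) {B : ℝ} (hB : 1 < B) :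
    ∫ u in Ioi (0:ℝ), (Real.log (u ^ 2 + B ^ 2) - Real.log (u ^ 2 + 1)) / (u ^ 2 + a ^ 2)
      = π / a * (Real.log (a + B) - Real.log (a + 1)) := by
  set μ := volume.restrict (Ioi (0:ℝ)) with hμ
  set ν := volume.restrict (Ioc (1:ℝ) B) with hν
  set f : ℝ → ℝ → ℝ := fun u b => 2 * b / (u ^ 2 + b ^ 2) * (u ^ 2 + a ^ 2)⁻¹ with hf
  -- measurability
  have hmeas : Measurable (Function.uncurry f) := by
    apply Measurable.mul
    · apply Measurable.div
      · fun_prop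
      · fun_prop
    · fun_prop
  -- inner integral in b, for u > 0
  have hinner : ∀ u : ℝ, 0 < u → ∫ b, f u b ∂ν =
      (Real.log (u ^ 2 + B ^ 2) - Real.log (u ^ 2 + 1)) * (u ^ 2 + a ^ 2)⁻¹ := by
    intro u hu
    have : ∫ b, f u b ∂ν = (∫ b in Ioc (1:ℝ) B, 2 * b / (u ^ 2 + b ^ 2)) * (u ^ 2 + a ^ 2)⁻¹ := by
      rw [hν, ← integral_mul_const]
    rw [this, ← intervalIntegral.integral_of_le hB.le, ftc_b hu hB.le]
  -- sections in b are integrable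
  have hsec : ∀ᵐ u ∂μ, Integrable (f u) ν := by
    rw [hμ]
    filter_upwards [ae_restrict_mem measurableSet_Ioi] with u hu
    have hu0 : (0:ℝ) < u := hu
    have hcont : Continuous (f u) := by
      apply Continuous.mul _ continuous_const
      exact ((continuous_const.mul continuous_id).div (by continuity) (fun b => by positivity))
    exact hcont.integrableOn_Ioc
  -- pointwise nonneg on the domain
  have hnonneg : ∀ u : ℝ, 0 < u → ∀ b ∈ Ioc (1:ℝ) B, 0 ≤ f u b := by
    intro u hu b hb
    have hb0 : (0:ℝ) < b := lt_trans one_pos hb.1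
    positivity
  -- norm integral equals inner integral
  have hnormint : ∀ u : ℝ, 0 < u → ∫ b, ‖f u b‖ ∂ν = ∫ b, f u b ∂ν := by
    intro u hu
    rw [hν]
    refine setIntegral_congr_fun measurableSet_Ioc (fun b hb => ?_)
    rw [Real.norm_eq_abs, abs_of_nonneg (hnonneg u hu b hb)]
  -- the u-marginal of norms is integrable
  have hmarg : Integrable (fun u => ∫ b, ‖f u b‖ ∂ν) μ := by
    have h1 : IntegrableOn (fun u : ℝ =>
        (Real.log (u ^ 2 + B ^ 2) - Real.log (u ^ 2 + 1)) * (u ^ 2 + a ^ 2)⁻¹) (Ioi 0) := by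
      have h2 : IntegrableOn (fun u : ℝ => Real.log (u ^ 2 + B ^ 2) / (u ^ 2 + a ^ 2)
          - Real.log (u ^ 2 + 1 ^ 2) / (u ^ 2 + a ^ 2)) (Ioi 0) :=
        (log_kernel_integrable ha hB.le).sub (log_kernel_integrable ha le_rfl)
      exact h2.congr_fun (fun u _ => by rw [one_pow]; ring) measurableSet_Ioi
    refine h1.congr_fun_ae ?_
    rw [← hμ]
    filter_upwards [ae_restrict_mem (μ := volume) (s := Ioi 0) measurableSet_Ioi] with u hu
    exact ((hnormint u hu).trans (hinner u hu)).symm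
  -- joint integrability
  have hInt : Integrable (Function.uncurry f) (μ.prod ν) :=
    (integrable_prod_iff hmeas.aestronglyMeasurable).mpr ⟨hsec, hmarg.congr (by rfl)⟩
  have hswap := integral_integral_swap hInt
  -- evaluate the left side
  have hL : ∫ u, ∫ b, f u b ∂ν ∂μ =
      ∫ u in Ioi (0:ℝ), (Real.log (u ^ 2 + B ^ 2) - Real.log (u ^ 2 + 1)) / (u ^ 2 + a ^ 2) := by
    rw [hμ]
    refine setIntegral_congr_fun measurableSet_Ioi (fun u hu => ?_)
    rw [hinner u hu, div_eq_mul_inv]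
  -- evaluate the right side
  have hR : ∫ b, ∫ u, f u b ∂μ ∂ν = π / a * (Real.log (a + B) - Real.log (a + 1)) := by
    have hcongr : (fun b => ∫ u, f u b ∂μ) =ᵐ[ν] (fun b => π / (a * (a + b))) := by
      rw [hν]
      filter_upwards [ae_restrict_mem measurableSet_Ioc,
        ae_restrict_of_ae (ae_ne_real a)] with b hb hne
      have hb0 : (0:ℝ) < b := lt_trans one_pos hb.1
      have hpt : ∀ u : ℝ, f u b = 2 * b * ((u ^ 2 + b ^ 2) * (u ^ 2 + a ^ 2))⁻¹ := by
        intro u; rw [hf]; simp only [mul_inv]; ring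
      have : ∫ u, f u b ∂μ = 2 * b * ∫ u in Ioi (0:ℝ), ((u ^ 2 + b ^ 2) * (u ^ 2 + a ^ 2))⁻¹ := by
        rw [hμ, ← integral_const_mul]
        exact integral_congr_ae (Filter.Eventually.of_forall (fun u => hpt u))
      rw [this, two_integral hb0 ha hne]
      have hab : a + b ≠ 0 := by positivity
      field_simp
    rw [integral_congr_ae hcongr, hν, ← intervalIntegral.integral_of_le hB.le, ftc_outer ha hB.le]
  rw [← hL, hswap, hR]

lemma log_split {n : ℕ} (hn : 0 < n) (u : ℝ) :
    Real.log (u ^ 2 + (n:ℝ) ^ 2) = 2 * Real.log n + Real.log ((u / n) ^ 2 + 1) := by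
  have hn0 : (0:ℝ) < (n:ℝ) := by exact_mod_cast hn
  have h1 : (u / (n:ℝ)) ^ 2 + 1 = (u ^ 2 + (n:ℝ) ^ 2) / ((n:ℝ) ^ 2) := by field_simp
  rw [h1, Real.log_div (by positivity) (by positivity), Real.log_pow]
  push_cast
  ring

lemma G_integrable {a : ℝ} (ha : 0 < a) {n : ℕ} (hn : 1 ≤ n) :
    IntegrableOn (fun u : ℝ => Real.log ((u / n) ^ 2 + 1) / (u ^ 2 + a ^ 2)) (Ioi 0) := by
  have hn0 : (0:ℝ) < (n:ℝ) := by exact_mod_cast hn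
  have hn1 : (1:ℝ) ≤ (n:ℝ) := by exact_mod_cast hn
  have h1 : IntegrableOn (fun u : ℝ => Real.log (u ^ 2 + (n:ℝ) ^ 2) / (u ^ 2 + a ^ 2)
      - (2 * Real.log n) * (u ^ 2 + a ^ 2)⁻¹) (Ioi 0) :=
    (log_kernel_integrable ha hn1).sub ((base_integrable ha).const_mul _)
  refine h1.congr_fun (fun u _ => ?_) measurableSet_Ioi
  simp only [log_split hn u]
  ring

lemma G_tendsto {a : ℝ} (ha : 0 < a) :
    Tendsto (fun n : ℕ => ∫ u in Ioi (0:ℝ), Real.log ((u / n) ^ 2 + 1) / (u ^ 2 + a ^ 2))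
      atTop (nhds 0) := by
  have key := tendsto_integral_filter_of_dominated_convergence
    (μ := volume.restrict (Ioi (0:ℝ)))
    (F := fun (n : ℕ) (u : ℝ) => Real.log ((u / n) ^ 2 + 1) / (u ^ 2 + a ^ 2))
    (f := fun _ : ℝ => (0:ℝ))
    (bound := fun u : ℝ => Real.log (u ^ 2 + 1) / (u ^ 2 + a ^ 2))
    (l := atTop) ?_ ?_ ?_ ?_
  · simpa using key
  · filter_upwards with n
    have : Continuous (fun u : ℝ => Real.log ((u / n) ^ 2 + 1) / (u ^ 2 + a ^ 2)) := by
      refine Continuous.div ?_ (by continuity) (fun u => by positivity)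
      exact Continuous.log (by continuity) (fun u => by positivity)
    exact this.aestronglyMeasurable.restrict
  · filter_upwards [eventually_ge_atTop 1] with n hn
    filter_upwards [ae_restrict_mem measurableSet_Ioi] with u hu
    have hu0 : (0:ℝ) < u := hu
    have hn1 : (1:ℝ) ≤ (n:ℝ) := by exact_mod_cast hn
    have hlog : (0:ℝ) ≤ Real.log ((u / n) ^ 2 + 1) :=
      Real.log_nonneg (by nlinarith [sq_nonneg (u / (n:ℝ))])
    rw [Real.norm_eq_abs, abs_of_nonneg (by positivity)]
    have hsq : (u / (n:ℝ)) ^ 2 ≤ u ^ 2 := by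
      rw [div_pow]
      apply div_le_self (by positivity)
      nlinarith
    gcongr
  · exact (log_kernel_integrable ha le_rfl).congr_fun
      (fun u _ => by rw [one_pow]) measurableSet_Ioi
  · filter_upwards [ae_restrict_mem measurableSet_Ioi] with u hu
    have h1 : Tendsto (fun n : ℕ => (u / n) ^ 2 + 1) atTop (nhds 1) := by
      have : Tendsto (fun n : ℕ => u / n) atTop (nhds 0) :=
        tendsto_const_nhds.div_atTop tendsto_natCast_atTop_atTop
      have := (this.pow 2).add_const 1
      simpa using this
    have h2 : Tendsto (fun n : ℕ => Real.log ((u / n) ^ 2 + 1)) atTop (nhds 0) := by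
      have := ((Real.continuousAt_log one_ne_zero).tendsto.comp h1)
      simpa [Function.comp_def] using this
    simpa using h2.div_const (u ^ 2 + a ^ 2)

lemma F1_value {a : ℝ} (ha : 0 < a) :
    ∫ u in Ioi (0:ℝ), Real.log (u ^ 2 + 1) / (u ^ 2 + a ^ 2) = π / a * Real.log (a + 1) := by
  set F1 := ∫ u in Ioi (0:ℝ), Real.log (u ^ 2 + 1) / (u ^ 2 + a ^ 2) with hF1
  -- key identity for n ≥ 2
  have key : ∀ n : ℕ, 2 ≤ n → F1 = π / a * Real.log (a + 1)
      + π / a * (Real.log n - Real.log (a + n))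
      + ∫ u in Ioi (0:ℝ), Real.log ((u / n) ^ 2 + 1) / (u ^ 2 + a ^ 2) := by
    intro n hn
    have hn0 : 0 < n := by omega
    have hn1R : (1:ℝ) < (n:ℝ) := by exact_mod_cast (by omega : 1 < n)
    have hfub := fubini_step ha hn1R
    -- split the integrand
    have hsplit : ∀ u : ℝ,
        (Real.log (u ^ 2 + (n:ℝ) ^ 2) - Real.log (u ^ 2 + 1)) / (u ^ 2 + a ^ 2)
        = ((2 * Real.log n) * (u ^ 2 + a ^ 2)⁻¹
            + Real.log ((u / n) ^ 2 + 1) / (u ^ 2 + a ^ 2))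
          - Real.log (u ^ 2 + 1) / (u ^ 2 + a ^ 2) := by
      intro u
      rw [log_split hn0 u]
      ring
    have hA : IntegrableOn (fun u : ℝ => (2 * Real.log n) * (u ^ 2 + a ^ 2)⁻¹) (Ioi 0) :=
      (base_integrable ha).const_mul _
    have hG : IntegrableOn (fun u : ℝ =>
        Real.log ((u / n) ^ 2 + 1) / (u ^ 2 + a ^ 2)) (Ioi 0) := G_integrable ha hn0
    have hK : IntegrableOn (fun u : ℝ => Real.log (u ^ 2 + 1) / (u ^ 2 + a ^ 2)) (Ioi 0) :=
      (log_kernel_integrable ha le_rfl).congr_fun (fun u _ => by rw [one_pow]) measurableSet_Ioi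
    have hAG : IntegrableOn (fun u : ℝ => (2 * Real.log n) * (u ^ 2 + a ^ 2)⁻¹
        + Real.log ((u / n) ^ 2 + 1) / (u ^ 2 + a ^ 2)) (Ioi 0) := hA.add hG
    rw [setIntegral_congr_fun measurableSet_Ioi (fun u _ => hsplit u)] at hfub
    rw [integral_sub hAG hK, integral_add hA hG, integral_const_mul,
      base_integral ha] at hfub
    have hnot : 2 * Real.log n * (π / (2 * a)) = π / a * Real.log n := by
      field_simp
    rw [hnot] at hfub
    have := hfub
    linarith [hfub]
  -- limits
  have t1 : Tendsto (fun n : ℕ => π / a * (Real.log n - Real.log (a + n))) atTop (nhds 0) := by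
    have h1 : Tendsto (fun n : ℕ => (a + n) / n) atTop (nhds 1) := by
      have h0 : Tendsto (fun n : ℕ => a / n) atTop (nhds 0) :=
        tendsto_const_nhds.div_atTop tendsto_natCast_atTop_atTop
      have := h0.add_const 1
      rw [zero_add] at this
      apply this.congr'
      filter_upwards [eventually_ge_atTop 1] with n hn
      have hnR : (0:ℝ) < (n:ℝ) := by exact_mod_cast (by omega : 0 < n)
      field_simp
    have h2 : Tendsto (fun n : ℕ => Real.log ((a + n) / n)) atTop (nhds 0) := by
      have := (Real.continuousAt_log one_ne_zero).tendsto.comp h1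
      simpa [Function.comp_def] using this
    have h3 : Tendsto (fun n : ℕ => Real.log n - Real.log (a + n)) atTop (nhds 0) := by
      have := h2.neg
      rw [neg_zero] at this
      apply this.congr'
      filter_upwards [eventually_ge_atTop 1] with n hn
      have hnR : (0:ℝ) < (n:ℝ) := by exact_mod_cast (by omega : 0 < n)
      rw [Real.log_div (by positivity) (by positivity)]
      ring
    have := h3.const_mul (π / a)
    simpa using this
  have t2 := G_tendsto ha
  -- conclude
  have tsum : Tendsto (fun n : ℕ => π / a * Real.log (a + 1)
      + π / a * (Real.log n - Real.log (a + n))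
      + ∫ u in Ioi (0:ℝ), Real.log ((u / n) ^ 2 + 1) / (u ^ 2 + a ^ 2)) atTop
      (nhds (π / a * Real.log (a + 1))) := by
    have := (tendsto_const_nhds (x := π / a * Real.log (a + 1)) (f := atTop (α := ℕ))).add
      t1 |>.add t2
    simpa using this
  have tconst : Tendsto (fun _ : ℕ => F1) atTop (nhds (π / a * Real.log (a + 1))) := by
    apply tsum.congr'
    filter_upwards [eventually_ge_atTop 2] with n hn
    exact (key n hn).symm
  exact tendsto_nhds_unique tendsto_const_nhds tconst

/-- For real `x > 0`, the integral `∫₁^∞ (log t)/(√(t−1)(t+x)) dt` converges and equals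
`(π log x)/√(x+1) + (π/√(x+1)) log((√(x+1)+1)/(√(x+1)−1))`. -/
theorem stmt7 (x : ℝ) (hx : 0 < x) :
    IntegrableOn (fun t : ℝ => Real.log t / (Real.sqrt (t - 1) * (t + x))) (Set.Ioi 1) ∧
    ∫ t in Set.Ioi (1 : ℝ), Real.log t / (Real.sqrt (t - 1) * (t + x)) =
      Real.pi * Real.log x / Real.sqrt (x + 1) +
        (Real.pi / Real.sqrt (x + 1)) *
          Real.log ((Real.sqrt (x + 1) + 1) / (Real.sqrt (x + 1) - 1)) := by
  set a := Real.sqrt (x + 1) with hadef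
  have ha2 : a ^ 2 = x + 1 := Real.sq_sqrt (by linarith)
  have ha1 : 1 < a := by
    have h0 : 0 ≤ a := Real.sqrt_nonneg _
    nlinarith
  have ha0 : 0 < a := lt_trans one_pos ha1
  set g : ℝ → ℝ := fun t => Real.log t / (Real.sqrt (t - 1) * (t + x)) with hg
  set s : Set ℝ := Ioi 0 with hs
  have hf' : ∀ u ∈ s, HasDerivWithinAt (fun u : ℝ => 1 + u ^ 2) (2 * u) s u := by
    intro u _
    have : HasDerivAt (fun u : ℝ => 1 + u ^ 2) (2 * u) u := by
      simpa using (hasDerivAt_pow 2 u).const_add 1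
    exact this.hasDerivWithinAt
  have hinj : InjOn (fun u : ℝ => 1 + u ^ 2) s := by
    intro u hu v hv huv
    have hu0 : (0:ℝ) < u := hu
    have hv0 : (0:ℝ) < v := hv
    simp only at huv
    nlinarith
  have himg : (fun u : ℝ => 1 + u ^ 2) '' s = Ioi 1 := by
    ext t
    constructor
    · rintro ⟨u, hu, rfl⟩
      have hu0 : (0:ℝ) < u := hu
      show (1:ℝ) < 1 + u ^ 2
      nlinarith
    · intro ht
      have ht1 : (1:ℝ) < t := ht
      refine ⟨Real.sqrt (t - 1), ?_, ?_⟩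
      · show (0:ℝ) < Real.sqrt (t - 1)
        exact Real.sqrt_pos.mpr (by linarith)
      · show 1 + Real.sqrt (t - 1) ^ 2 = t
        rw [Real.sq_sqrt (by linarith)]; ring
  -- pointwise identity on s
  have hpt : ∀ u ∈ s, |2 * u| • g (1 + u ^ 2) = 2 * (Real.log (u ^ 2 + 1) / (u ^ 2 + a ^ 2)) := by
    intro u hu
    have hu0 : (0:ℝ) < u := hu
    have h1 : (1 + u ^ 2) - 1 = u ^ 2 := by ring
    have h2 : Real.sqrt ((1 + u ^ 2) - 1) = u := by rw [h1, Real.sqrt_sq hu0.le]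
    have h3 : (1 + u ^ 2) + x = u ^ 2 + a ^ 2 := by rw [ha2]; ring
    rw [hg]
    simp only [smul_eq_mul]
    rw [h2, h3, abs_of_nonneg (by positivity), show Real.log (1 + u ^ 2)
      = Real.log (u ^ 2 + 1) by rw [add_comm]]
    have hd : (0:ℝ) < u ^ 2 + a ^ 2 := by positivity
    field_simp
  -- integrability
  have hK2 : IntegrableOn (fun u : ℝ => 2 * (Real.log (u ^ 2 + 1) / (u ^ 2 + a ^ 2))) s := by
    have h2 : IntegrableOn (fun u : ℝ => 2 * (Real.log (u ^ 2 + 1 ^ 2) / (u ^ 2 + a ^ 2)))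
        (Ioi 0) := (log_kernel_integrable ha0 le_rfl).const_mul 2
    exact h2.congr_fun (fun u _ => by rw [one_pow]) measurableSet_Ioi
  have hIntIff := integrableOn_image_iff_integrableOn_abs_deriv_smul
    measurableSet_Ioi hf' hinj g
  rw [himg] at hIntIff
  have hInt : IntegrableOn g (Ioi 1) := by
    rw [hIntIff]
    exact hK2.congr_fun (fun u hu => (hpt u hu).symm) measurableSet_Ioi
  refine ⟨hInt, ?_⟩
  -- the integral
  have hchg := integral_image_eq_integral_abs_deriv_smul measurableSet_Ioi hf' hinj g
  rw [himg] at hchg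
  have hval : ∫ t in Ioi (1:ℝ), g t = 2 * (π / a * Real.log (a + 1)) := by
    rw [hchg, setIntegral_congr_fun measurableSet_Ioi hpt, integral_const_mul, F1_value ha0]
  -- arithmetic on the right-hand side
  have hx_eq : x = (a - 1) * (a + 1) := by nlinarith
  have hlogx : Real.log x = Real.log (a - 1) + Real.log (a + 1) := by
    rw [hx_eq, Real.log_mul (by linarith) (by linarith)]
  have hlogdiv : Real.log ((a + 1) / (a - 1)) = Real.log (a + 1) - Real.log (a - 1) :=
    Real.log_div (by linarith) (by linarith)
  rw [hval, hlogx, hlogdiv]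
  field_simp
  ring
end

section
/- Let g(z) = (2/3)(z−1)^{3/2} for z ∈ ℂ∖(−∞,1], using the principal branch −π < arg(z−1) < π. Then there exists a constant c > 0 such that Re g(z) ≤ −c |z| for every z ≠ 0 with arg z = 2π/3, and for every z ≠ 0 with arg z = −2π/3. -/
open Complex

/-- There is `c > 0` such that `Re((2/3)(z−1)^{3/2}) ≤ −c|z|` (principal branch) for
every `z ≠ 0` on the rays `arg z = 2π/3` and `arg z = −2π/3`. -/
theorem stmt15 : ∃ c > (0 : ℝ), ∀ z : ℂ, z ≠ 0 →
    (Complex.arg z = 2 * Real.pi / 3 ∨ Complex.arg z = -(2 * Real.pi / 3)) →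
    ((2 / 3 : ℂ) * (z - 1) ^ ((3 : ℂ) / 2)).re ≤ -c * ‖z‖ := by
  refine ⟨1/3, by norm_num, ?_⟩
  intro z hz harg
  set r := ‖z‖ with hrdef
  have hr : 0 < r := norm_pos_iff.mpr hz
  have hcos : Real.cos z.arg = -(1/2) := by
    have h23 : (2 * Real.pi / 3 : ℝ) = Real.pi - Real.pi / 3 := by ring
    rcases harg with h | h <;> rw [h]
    · rw [h23, Real.cos_pi_sub, Real.cos_pi_div_three]
    · rw [Real.cos_neg, h23, Real.cos_pi_sub, Real.cos_pi_div_three]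
  have hre : z.re = -(r/2) := by
    have h := Complex.cos_arg hz
    rw [hcos] at h
    field_simp at h
    linarith
  have hsin2 : (Real.sin z.arg)^2 = 3/4 := by
    have h := Real.sin_sq_add_cos_sq z.arg
    rw [hcos] at h
    nlinarith
  have him2 : z.im^2 = 3/4 * r^2 := by
    have h := Complex.sin_arg z
    have h2 : z.im = Real.sin z.arg * r := by
      rw [h]; field_simp; rfl
    rw [h2, mul_pow, hsin2]
  have himne : z.im ≠ 0 := by
    intro h; rw [h] at him2; nlinarith
  set w : ℂ := z - 1 with hwdef
  have hw_re : w.re = -(r/2) - 1 := by simp [hwdef, hre]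
  have hw_im : w.im = z.im := by simp [hwdef]
  have hwne : w ≠ 0 := by
    intro h
    apply himne
    rw [← hw_im, h]
    simp
  set m := ‖w‖ with hmdef
  have hm0 : 0 ≤ m := norm_nonneg w
  have hm2 : m^2 = r^2 + r + 1 := by
    rw [hmdef, Complex.sq_norm, Complex.normSq_apply, hw_re, hw_im]
    nlinarith [him2]
  have hmle : m ≤ r + 1 := by nlinarith
  set s : ℂ := w ^ ((2:ℂ)⁻¹) with hsdef
  set a := s.re with hadef
  set b := s.im with hbdef
  have hs2 : s^2 = w := by
    have h := Complex.cpow_nat_inv_pow w (n := 2) two_ne_zero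
    rw [hsdef]
    norm_num at h ⊢
    exact h
  have hs2' : w = s * s := by rw [← hs2]; ring
  have h1 : a^2 - b^2 = w.re := by rw [hs2', Complex.mul_re, ← hadef, ← hbdef]; ring
  have h2 : 2*a*b = w.im := by rw [hs2', Complex.mul_im, ← hadef, ← hbdef]; ring
  have hsum : a^2 + b^2 = m := by
    have habs : (‖s‖)^2 = m := by rw [← norm_pow, hs2]
    rw [← habs, Complex.sq_norm, Complex.normSq_apply, ← hadef, ← hbdef]; ring
  have ha0 : 0 ≤ a := by
    rw [hadef, hsdef, Complex.cpow_inv_two_re]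
    exact Real.sqrt_nonneg _
  have ha : 0 < a := by
    rcases ha0.lt_or_eq with h | h
    · exact h
    · exfalso
      apply himne
      rw [← hw_im, ← h2, ← h]
      ring
  have h1' : a^2 - b^2 = -(r/2) - 1 := by rw [h1, hw_re]
  -- rewrite the power and the goal
  have hsplit : (z - 1) ^ ((3:ℂ)/2) = w * s := by
    rw [hsdef, ← hwdef, show (3:ℂ)/2 = 1 + (2:ℂ)⁻¹ by norm_num,
      Complex.cpow_add _ _ hwne, Complex.cpow_one]
  have hgoal : ((2/3 : ℂ) * (z - 1) ^ ((3:ℂ)/2)).re = 2/3 * (w.re * a - w.im * b) := by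
    rw [hsplit, show (2/3 : ℂ) = ((2/3 : ℝ) : ℂ) by norm_num, Complex.re_ofReal_mul,
      Complex.mul_re, ← hadef, ← hbdef]
  rw [hgoal, ← h2, hw_re]
  clear_value r m a b s w
  clear hsplit hgoal hs2 hs2' h1 h2 hsdef hwdef hmdef hrdef hadef hbdef hcos hsin2
  clear him2 himne hre hw_im hw_re hwne hz harg s w z
  -- arithmetic
  have haa : a^2 * (2*m + r + 2) = 3*r^2/4 := by
    linear_combination ((2*m+r+2)/2) * h1' + ((2*m+r+2)/2) * hsum + hm2
  have h4 : 3*r^2/4 ≤ a^2*(3*r+4) := by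
    nlinarith [mul_nonneg (sq_nonneg a) (sub_nonneg.2 hmle)]
  have key : r/2 ≤ a*(r+2) := by
    by_contra hcon
    push_neg at hcon
    have h5 : a^2*(r+2)^2 < r^2/4 := by nlinarith [mul_pos ha hr]
    have h7 : a^2*(3*r+4) ≤ 3*(a^2*(r+2)^2) := by
      nlinarith [mul_nonneg (sq_nonneg a) (show (0:ℝ) ≤ 3*r^2+9*r+8 by nlinarith)]
    linarith
  have hb2 : b^2 = a^2 + r/2 + 1 := by linarith [h1']
  have e : 2/3 * ((-(r/2)-1) * a - 2*a*b*b) = -(4/3)*a^3 - a*(r+2) := by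
    linear_combination (-(4:ℝ)/3*a) * hb2
  rw [e]
  have ha3 : 0 ≤ a^3 := pow_nonneg ha0 3
  linarith
end
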